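/- Let N ≥ 1 be a natural number, let r : ℕ → ℝ satisfy r k < r (k+1) for all 0 ≤ k ≤ N−1, and let f : ℝ → ℝ be twice continuously differentiable on [0, ∞), convex on [0, ∞), and satisfy f(0) = 0. Let β, β' : ℕ → ℕ → ℕ satisfy: β 0 ℓ = β' 0 ℓ = 0 for all ℓ; β k N = β' k N = 0 for all k; β k k = β' k k for all k; and β k ℓ ≥ β' k ℓ for all k ≤ ℓ. For 1 ≤ k < ℓ ≤ N define mult_β(k, ℓ) = β k (ℓ−1) − β (k−1) (ℓ−1) − β k ℓ + β (k−1) ℓ (as an integer), and similarly mult_{β'}. Then Σ_{1 ≤ k < ℓ ≤ N} mult_β(k, ℓ) · f(r ℓ − r k) ≥ Σ_{1 ≤ k < ℓ ≤ N} mult_{β'}(k, ℓ) · f(r ℓ − r k). Moreover, if f is strictly convex on [0, ∞), then equality holds if and only if β k ℓ = β' k ℓ for all 1 ≤ k < ℓ ≤ N−1. (This is the combinatorial core of the paper's Theorem 5: the sum of a convex function of the lifetimes over the persistence diagram with real coefficients dominates the corresponding sum for the diagram with ℤ_p coefficients, since the persistent Betti numbers over ℝ dominate those over ℤ_p while the instantaneous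 dimensions agree.) -/

import Mathlib

open Finset

lemma shiftIcc (a b : ℕ) (h : ℕ → ℝ) :
    ∑ x ∈ Icc (a + 1) (b + 1), h x = ∑ x ∈ Icc a b, h (x + 1) := by
  rw [← Finset.map_add_right_Icc, Finset.sum_map]
  rfl

lemma shiftIcc0 (b : ℕ) (h : ℕ → ℝ) :
    ∑ x ∈ Icc 1 (b + 1), h x = ∑ x ∈ Icc 0 b, h (x + 1) := by
  have := shiftIcc 0 b h
  norm_num at this
  exact this

lemma key_abel (M : ℕ) (δ g : ℕ → ℕ → ℝ)
    (h0 : ∀ ℓ, δ 0 ℓ = 0) (hTop : ∀ k, δ k (M + 1) = 0)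
    (hd : ∀ k, δ k k = 0) (hg : ∀ k, g k k = 0) :
    ∑ k ∈ Icc 1 (M + 1), ∑ ℓ ∈ Icc (k + 1) (M + 1),
      (δ k (ℓ - 1) - δ (k - 1) (ℓ - 1) - δ k ℓ + δ (k - 1) ℓ) * g k ℓ
    = ∑ k ∈ Icc 1 M, ∑ ℓ ∈ Icc (k + 1) M,
        δ k ℓ * (g k (ℓ + 1) - g (k + 1) (ℓ + 1) - g k ℓ + g (k + 1) ℓ) := by
  have outerdrop : ∀ F : ℕ → ℕ → ℝ,
      (∑ k ∈ Icc 1 (M + 1), ∑ ℓ ∈ Icc (k + 1) M, F k ℓ)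
      = ∑ k ∈ Icc 1 M, ∑ ℓ ∈ Icc (k + 1) M, F k ℓ := by
    intro F
    symm
    apply Finset.sum_subset (Finset.Icc_subset_Icc_right (by omega))
    intro x hx hnx
    have hx' : x = M + 1 := by
      simp only [Finset.mem_Icc] at hx hnx; omega
    subst hx'
    rw [Finset.Icc_eq_empty (by omega), Finset.sum_empty]
  have outerdrop0 : ∀ F : ℕ → ℕ → ℝ, (∀ ℓ, F 0 ℓ = 0) →
      (∑ k ∈ Icc 0 M, ∑ ℓ ∈ Icc (k + 1) M, F k ℓ)
      = ∑ k ∈ Icc 1 M, ∑ ℓ ∈ Icc (k + 1) M, F k ℓ := by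
    intro F hF
    symm
    apply Finset.sum_subset (Finset.Icc_subset_Icc_left (by omega))
    intro x hx hnx
    have hx' : x = 0 := by
      simp only [Finset.mem_Icc] at hx hnx; omega
    subst hx'
    exact Finset.sum_eq_zero fun ℓ _ => hF ℓ
  have S1 : (∑ k ∈ Icc 1 (M + 1), ∑ ℓ ∈ Icc (k + 1) (M + 1), δ k (ℓ - 1) * g k ℓ)
      = ∑ k ∈ Icc 1 M, ∑ ℓ ∈ Icc (k + 1) M, δ k ℓ * g k (ℓ + 1) := by
    rw [← outerdrop]
    refine Finset.sum_congr rfl fun k _ => ?_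
    rw [shiftIcc]
    simp only [Nat.add_sub_cancel]
    symm
    apply Finset.sum_subset (Finset.Icc_subset_Icc_left (by omega))
    intro x hx hnx
    have hx' : x = k := by simp only [Finset.mem_Icc] at hx hnx; omega
    subst hx'
    rw [hd]; ring
  have S2 : (∑ k ∈ Icc 1 (M + 1), ∑ ℓ ∈ Icc (k + 1) (M + 1), δ (k - 1) (ℓ - 1) * g k ℓ)
      = ∑ k ∈ Icc 1 M, ∑ ℓ ∈ Icc (k + 1) M, δ k ℓ * g (k + 1) (ℓ + 1) := by
    have inner : ∀ k : ℕ, (∑ ℓ ∈ Icc (k + 1) (M + 1), δ (k - 1) (ℓ - 1) * g k ℓ)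
        = ∑ ℓ ∈ Icc k M, δ (k - 1) ℓ * g k (ℓ + 1) := by
      intro k
      rw [shiftIcc]
      simp only [Nat.add_sub_cancel]
    rw [Finset.sum_congr rfl fun k _ => inner k,
      shiftIcc0 M (fun k => ∑ ℓ ∈ Icc k M, δ (k - 1) ℓ * g k (ℓ + 1))]
    simp only [Nat.add_sub_cancel]
    exact outerdrop0 _ fun ℓ => by rw [h0]; ring
  have S3 : (∑ k ∈ Icc 1 (M + 1), ∑ ℓ ∈ Icc (k + 1) (M + 1), δ k ℓ * g k ℓ)
      = ∑ k ∈ Icc 1 M, ∑ ℓ ∈ Icc (k + 1) M, δ k ℓ * g k ℓ := by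
    rw [← outerdrop]
    refine Finset.sum_congr rfl fun k _ => ?_
    symm
    apply Finset.sum_subset (Finset.Icc_subset_Icc_right (by omega))
    intro x hx hnx
    have hx' : x = M + 1 := by simp only [Finset.mem_Icc] at hx hnx; omega
    subst hx'
    rw [hTop]; ring
  have S4 : (∑ k ∈ Icc 1 (M + 1), ∑ ℓ ∈ Icc (k + 1) (M + 1), δ (k - 1) ℓ * g k ℓ)
      = ∑ k ∈ Icc 1 M, ∑ ℓ ∈ Icc (k + 1) M, δ k ℓ * g (k + 1) ℓ := by
    rw [shiftIcc0 (M) (fun k => ∑ ℓ ∈ Icc (k + 1) (M + 1), δ (k - 1) ℓ * g k ℓ)]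
    simp only [Nat.add_sub_cancel]
    rw [← outerdrop0 _ (fun ℓ => by rw [h0]; ring)]
    refine Finset.sum_congr rfl fun k _ => ?_
    -- now: ∑ ℓ ∈ Icc (k+1+1) (M+1), δ k ℓ * g (k+1) ℓ = ∑ ℓ ∈ Icc (k+1) M, δ k ℓ * g (k+1) ℓ
    have step1 : (∑ ℓ ∈ Icc (k + 1 + 1) (M + 1), δ k ℓ * g (k + 1) ℓ)
        = ∑ ℓ ∈ Icc (k + 1 + 1) M, δ k ℓ * g (k + 1) ℓ := by
      symm
      apply Finset.sum_subset (Finset.Icc_subset_Icc_right (by omega))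
      intro x hx hnx
      have hx' : x = M + 1 := by simp only [Finset.mem_Icc] at hx hnx; omega
      subst hx'
      rw [hTop]; ring
    rw [step1]
    apply Finset.sum_subset (Finset.Icc_subset_Icc_left (by omega))
    intro x hx hnx
    have hx' : x = k + 1 := by simp only [Finset.mem_Icc] at hx hnx; omega
    subst hx'
    rw [hg]; ring
  have expandL : (∑ k ∈ Icc 1 (M + 1), ∑ ℓ ∈ Icc (k + 1) (M + 1),
      (δ k (ℓ - 1) - δ (k - 1) (ℓ - 1) - δ k ℓ + δ (k - 1) ℓ) * g k ℓ)
      = (∑ k ∈ Icc 1 (M + 1), ∑ ℓ ∈ Icc (k + 1) (M + 1), δ k (ℓ - 1) * g k ℓ)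
      - (∑ k ∈ Icc 1 (M + 1), ∑ ℓ ∈ Icc (k + 1) (M + 1), δ (k - 1) (ℓ - 1) * g k ℓ)
      - (∑ k ∈ Icc 1 (M + 1), ∑ ℓ ∈ Icc (k + 1) (M + 1), δ k ℓ * g k ℓ)
      + (∑ k ∈ Icc 1 (M + 1), ∑ ℓ ∈ Icc (k + 1) (M + 1), δ (k - 1) ℓ * g k ℓ) := by
    simp only [sub_mul, add_mul, Finset.sum_add_distrib, Finset.sum_sub_distrib]
  have expandR : (∑ k ∈ Icc 1 M, ∑ ℓ ∈ Icc (k + 1) M,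
      δ k ℓ * (g k (ℓ + 1) - g (k + 1) (ℓ + 1) - g k ℓ + g (k + 1) ℓ))
      = (∑ k ∈ Icc 1 M, ∑ ℓ ∈ Icc (k + 1) M, δ k ℓ * g k (ℓ + 1))
      - (∑ k ∈ Icc 1 M, ∑ ℓ ∈ Icc (k + 1) M, δ k ℓ * g (k + 1) (ℓ + 1))
      - (∑ k ∈ Icc 1 M, ∑ ℓ ∈ Icc (k + 1) M, δ k ℓ * g k ℓ)
      + (∑ k ∈ Icc 1 M, ∑ ℓ ∈ Icc (k + 1) M, δ k ℓ * g (k + 1) ℓ) := by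
    simp only [mul_sub, mul_add, Finset.sum_add_distrib, Finset.sum_sub_distrib]
  rw [expandL, expandR, S1, S2, S3, S4]

lemma quad_le {f : ℝ → ℝ} (hconv : ConvexOn ℝ (Set.Ici (0:ℝ)) f)
    {a b h : ℝ} (ha : 0 ≤ a) (hab : a < b) (hh : 0 < h) :
    f (a + h) + f b ≤ f a + f (b + h) := by
  set d := b + h - a with hd
  have hdpos : 0 < d := by simp [hd]; linarith
  set t := h / d with ht
  set s := (b - a) / d with hs
  have hts : s + t = 1 := by rw [hs, ht, ← add_div, div_eq_one_iff_eq hdpos.ne', hd]; ring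
  have ht0 : 0 < t := div_pos hh hdpos
  have hs0 : 0 < s := div_pos (by linarith) hdpos
  have hmem1 : a ∈ Set.Ici (0:ℝ) := ha
  have hmem2 : b + h ∈ Set.Ici (0:ℝ) := by simp; linarith
  have e1 : s * a + t * (b + h) = a + h := by
    rw [hs, ht, div_mul_eq_mul_div, div_mul_eq_mul_div, ← add_div, div_eq_iff hdpos.ne', hd]; ring
  have e2 : t * a + s * (b + h) = b := by
    rw [hs, ht, div_mul_eq_mul_div, div_mul_eq_mul_div, ← add_div, div_eq_iff hdpos.ne', hd]; ring
  have h1 := hconv.2 hmem1 hmem2 hs0.le ht0.le hts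
  have h2 := hconv.2 hmem1 hmem2 ht0.le hs0.le (by linarith)
  simp only [smul_eq_mul] at h1 h2
  rw [e1] at h1
  rw [e2] at h2
  have hcomb : (s + t) * f a + (s + t) * f (b + h) = f a + f (b + h) := by
    rw [hts]; ring
  nlinarith [hcomb]

lemma quad_lt {f : ℝ → ℝ} (hconv : StrictConvexOn ℝ (Set.Ici (0:ℝ)) f)
    {a b h : ℝ} (ha : 0 ≤ a) (hab : a < b) (hh : 0 < h) :
    f (a + h) + f b < f a + f (b + h) := by
  set d := b + h - a with hd
  have hdpos : 0 < d := by simp [hd]; linarith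
  set t := h / d with ht
  set s := (b - a) / d with hs
  have hts : s + t = 1 := by rw [hs, ht, ← add_div, div_eq_one_iff_eq hdpos.ne', hd]; ring
  have ht0 : 0 < t := div_pos hh hdpos
  have hs0 : 0 < s := div_pos (by linarith) hdpos
  have hmem1 : a ∈ Set.Ici (0:ℝ) := ha
  have hmem2 : b + h ∈ Set.Ici (0:ℝ) := by simp; linarith
  have hne : a ≠ b + h := by linarith
  have e1 : s * a + t * (b + h) = a + h := by
    rw [hs, ht, div_mul_eq_mul_div, div_mul_eq_mul_div, ← add_div, div_eq_iff hdpos.ne', hd]; ring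
  have e2 : t * a + s * (b + h) = b := by
    rw [hs, ht, div_mul_eq_mul_div, div_mul_eq_mul_div, ← add_div, div_eq_iff hdpos.ne', hd]; ring
  have h1 := hconv.2 hmem1 hmem2 hne hs0 ht0 hts
  have h2 := hconv.convexOn.2 hmem1 hmem2 ht0.le hs0.le (by linarith)
  simp only [smul_eq_mul] at h1 h2
  rw [e1] at h1
  rw [e2] at h2
  have hcomb : (s + t) * f a + (s + t) * f (b + h) = f a + f (b + h) := by
    rw [hts]; ring
  nlinarith [hcomb]



/-- (Combinatorial core of Theorem 5 of the paper.)  Let `N ≥ 1`,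
`r` strictly increasing on `{0, …, N}`, `f` twice continuously differentiable, convex on
`[0, ∞)` with `f 0 = 0`, and let `β, β' : ℕ → ℕ → ℕ` satisfy `β 0 ℓ = β' 0 ℓ = 0`,
`β k N = β' k N = 0`, `β k k = β' k k`, and `β k ℓ ≥ β' k ℓ` for `k ≤ ℓ`.  Then the sum
of `f` of the lifetimes weighted by the multiplicities of `β` dominates that of `β'`,
with equality (for strictly convex `f`) iff `β` and `β'` agree for `1 ≤ k < ℓ ≤ N-1`. -/
theorem convex_lifetime_sum_dominates
    (N : ℕ) (hN : 1 ≤ N) (r : ℕ → ℝ) (hr : ∀ k, k ≤ N - 1 → r k < r (k + 1))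
    (f : ℝ → ℝ) (hf : ContDiffOn ℝ 2 f (Set.Ici (0 : ℝ)))
    (hconv : ConvexOn ℝ (Set.Ici (0 : ℝ)) f) (hf0 : f 0 = 0)
    (β β' : ℕ → ℕ → ℕ)
    (hβ0 : ∀ ℓ, β 0 ℓ = 0) (hβ'0 : ∀ ℓ, β' 0 ℓ = 0)
    (hβN : ∀ k, β k N = 0) (hβ'N : ∀ k, β' k N = 0)
    (hdiag : ∀ k, β k k = β' k k)
    (hdom : ∀ k ℓ, k ≤ ℓ → β' k ℓ ≤ β k ℓ) :
    (∑ k ∈ Icc 1 N, ∑ ℓ ∈ Icc (k + 1) N,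
        (((β k (ℓ - 1) : ℤ) - (β (k - 1) (ℓ - 1) : ℤ) - (β k ℓ : ℤ)
          + (β (k - 1) ℓ : ℤ) : ℤ) : ℝ) * f (r ℓ - r k))
      ≥ (∑ k ∈ Icc 1 N, ∑ ℓ ∈ Icc (k + 1) N,
        (((β' k (ℓ - 1) : ℤ) - (β' (k - 1) (ℓ - 1) : ℤ) - (β' k ℓ : ℤ)
          + (β' (k - 1) ℓ : ℤ) : ℤ) : ℝ) * f (r ℓ - r k)) ∧
    (StrictConvexOn ℝ (Set.Ici (0 : ℝ)) f →
      ((∑ k ∈ Icc 1 N, ∑ ℓ ∈ Icc (k + 1) N,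
          (((β k (ℓ - 1) : ℤ) - (β (k - 1) (ℓ - 1) : ℤ) - (β k ℓ : ℤ)
            + (β (k - 1) ℓ : ℤ) : ℤ) : ℝ) * f (r ℓ - r k))
        = (∑ k ∈ Icc 1 N, ∑ ℓ ∈ Icc (k + 1) N,
          (((β' k (ℓ - 1) : ℤ) - (β' (k - 1) (ℓ - 1) : ℤ) - (β' k ℓ : ℤ)
            + (β' (k - 1) ℓ : ℤ) : ℤ) : ℝ) * f (r ℓ - r k))
        ↔ ∀ k ℓ, 1 ≤ k → k < ℓ → ℓ ≤ N - 1 → β k ℓ = β' k ℓ)) := by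
  obtain ⟨M, rfl⟩ : ∃ M, N = M + 1 := ⟨N - 1, by omega⟩
  simp only [Nat.add_sub_cancel] at hr ⊢
  -- strict monotonicity of r on {0,…,M+1}
  have rmono : ∀ i j : ℕ, i < j → j ≤ M + 1 → r i < r j := by
    intro i j hij hjN
    induction j with
    | zero => omega
    | succ n ih =>
      have h1 : r n < r (n + 1) := hr n (by omega)
      rcases Nat.lt_or_ge i n with hc | hc
      · exact (ih (by omega) (by omega)).trans h1
      · have : i = n := by omega
        subst this; exact h1
  have rmono' : ∀ i j : ℕ, i ≤ j → j ≤ M + 1 → r i ≤ r j := by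
    intro i j hij hjN
    rcases eq_or_lt_of_le hij with h | h
    · subst h; exact le_refl _
    · exact (rmono i j h hjN).le
  -- the key rearrangement
  have Ekey := key_abel M (fun k l => (β k l : ℝ) - (β' k l : ℝ))
      (fun k l => f (r l - r k))
      (fun ℓ => by simp [hβ0, hβ'0])
      (fun k => by simp [hβN, hβ'N])
      (fun k => by simp [hdiag])
      (fun k => by simp [hf0])
  have hdiff : (∑ k ∈ Icc 1 (M + 1), ∑ ℓ ∈ Icc (k + 1) (M + 1),
        (((β k (ℓ - 1) : ℤ) - (β (k - 1) (ℓ - 1) : ℤ) - (β k ℓ : ℤ)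
          + (β (k - 1) ℓ : ℤ) : ℤ) : ℝ) * f (r ℓ - r k))
      - (∑ k ∈ Icc 1 (M + 1), ∑ ℓ ∈ Icc (k + 1) (M + 1),
        (((β' k (ℓ - 1) : ℤ) - (β' (k - 1) (ℓ - 1) : ℤ) - (β' k ℓ : ℤ)
          + (β' (k - 1) ℓ : ℤ) : ℤ) : ℝ) * f (r ℓ - r k))
      = ∑ k ∈ Icc 1 M, ∑ ℓ ∈ Icc (k + 1) M,
          ((β k ℓ : ℝ) - (β' k ℓ : ℝ)) *
            (f (r (ℓ + 1) - r k) - f (r (ℓ + 1) - r (k + 1)) - f (r ℓ - r k)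
              + f (r ℓ - r (k + 1))) := by
    rw [← Ekey, ← Finset.sum_sub_distrib]
    refine Finset.sum_congr rfl fun k _ => ?_
    rw [← Finset.sum_sub_distrib]
    refine Finset.sum_congr rfl fun ℓ _ => ?_
    push_cast
    ring
  -- positivity of the convexity factor
  have hCpos : ∀ k ℓ : ℕ, 1 ≤ k → k + 1 ≤ ℓ → ℓ ≤ M →
      StrictConvexOn ℝ (Set.Ici (0 : ℝ)) f →
      0 < f (r (ℓ + 1) - r k) - f (r (ℓ + 1) - r (k + 1)) - f (r ℓ - r k)
        + f (r ℓ - r (k + 1)) := by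
    intro k ℓ hk hkl hlM hs
    have ha : (0:ℝ) ≤ r ℓ - r (k + 1) := by
      have := rmono' (k + 1) ℓ hkl (by omega); linarith
    have hab : r ℓ - r (k + 1) < r ℓ - r k := by
      have := hr k (by omega); linarith
    have hh : (0:ℝ) < r (ℓ + 1) - r ℓ := by
      have := hr ℓ (by omega); linarith
    have q := quad_lt hs ha hab hh
    have e1 : r ℓ - r (k + 1) + (r (ℓ + 1) - r ℓ) = r (ℓ + 1) - r (k + 1) := by ring
    have e2 : r ℓ - r k + (r (ℓ + 1) - r ℓ) = r (ℓ + 1) - r k := by ring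
    rw [e1, e2] at q
    linarith
  have hCnn : ∀ k ℓ : ℕ, 1 ≤ k → k + 1 ≤ ℓ → ℓ ≤ M →
      0 ≤ f (r (ℓ + 1) - r k) - f (r (ℓ + 1) - r (k + 1)) - f (r ℓ - r k)
        + f (r ℓ - r (k + 1)) := by
    intro k ℓ hk hkl hlM
    have ha : (0:ℝ) ≤ r ℓ - r (k + 1) := by
      have := rmono' (k + 1) ℓ hkl (by omega); linarith
    have hab : r ℓ - r (k + 1) < r ℓ - r k := by
      have := hr k (by omega); linarith
    have hh : (0:ℝ) < r (ℓ + 1) - r ℓ := by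
      have := hr ℓ (by omega); linarith
    have q := quad_le hconv ha hab hh
    have e1 : r ℓ - r (k + 1) + (r (ℓ + 1) - r ℓ) = r (ℓ + 1) - r (k + 1) := by ring
    have e2 : r ℓ - r k + (r (ℓ + 1) - r ℓ) = r (ℓ + 1) - r k := by ring
    rw [e1, e2] at q
    linarith
  have hδnn : ∀ k ℓ : ℕ, k ≤ ℓ → (0:ℝ) ≤ (β k ℓ : ℝ) - (β' k ℓ : ℝ) := by
    intro k ℓ hkl
    have := hdom k ℓ hkl
    have : (β' k ℓ : ℝ) ≤ (β k ℓ : ℝ) := by exact_mod_cast this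
    linarith
  have htermnn : ∀ k ∈ Icc 1 M, ∀ ℓ ∈ Icc (k + 1) M,
      0 ≤ ((β k ℓ : ℝ) - (β' k ℓ : ℝ)) *
          (f (r (ℓ + 1) - r k) - f (r (ℓ + 1) - r (k + 1)) - f (r ℓ - r k)
            + f (r ℓ - r (k + 1))) := by
    intro k hk ℓ hl
    simp only [Finset.mem_Icc] at hk hl
    exact mul_nonneg (hδnn k ℓ (by omega)) (hCnn k ℓ hk.1 hl.1 hl.2)
  constructor
  · rw [ge_iff_le, ← sub_nonneg, hdiff]
    exact Finset.sum_nonneg fun k hk =>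
      Finset.sum_nonneg fun ℓ hl => htermnn k hk ℓ hl
  · intro hstrict
    constructor
    · intro heq k ℓ hk hkl hlM
      have hzero : (∑ k ∈ Icc 1 M, ∑ ℓ ∈ Icc (k + 1) M,
          ((β k ℓ : ℝ) - (β' k ℓ : ℝ)) *
            (f (r (ℓ + 1) - r k) - f (r (ℓ + 1) - r (k + 1)) - f (r ℓ - r k)
              + f (r ℓ - r (k + 1)))) = 0 := by
        rw [← hdiff, heq, sub_self]
      have houter := (Finset.sum_eq_zero_iff_of_nonneg
        (fun k hk => Finset.sum_nonneg fun ℓ hl => htermnn k hk ℓ hl)).mp hzero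
      have hkmem : k ∈ Icc 1 M := by simp only [Finset.mem_Icc]; omega
      have hinner := (Finset.sum_eq_zero_iff_of_nonneg
        (fun ℓ hl => htermnn k hkmem ℓ hl)).mp (houter k hkmem)
      have hlmem : ℓ ∈ Icc (k + 1) M := by simp only [Finset.mem_Icc]; omega
      have hterm := hinner ℓ hlmem
      have hCp := hCpos k ℓ hk (by omega) hlM hstrict
      have hδz : (β k ℓ : ℝ) - (β' k ℓ : ℝ) = 0 := by
        rcases mul_eq_zero.mp hterm with h | h
        · exact h
        · exact absurd h (ne_of_gt hCp)
      have : (β k ℓ : ℝ) = (β' k ℓ : ℝ) := by linarith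
      exact_mod_cast this
    · intro hagree
      have hzero : (∑ k ∈ Icc 1 M, ∑ ℓ ∈ Icc (k + 1) M,
          ((β k ℓ : ℝ) - (β' k ℓ : ℝ)) *
            (f (r (ℓ + 1) - r k) - f (r (ℓ + 1) - r (k + 1)) - f (r ℓ - r k)
              + f (r ℓ - r (k + 1)))) = 0 := by
        apply Finset.sum_eq_zero
        intro k hk
        apply Finset.sum_eq_zero
        intro ℓ hl
        simp only [Finset.mem_Icc] at hk hl
        rw [hagree k ℓ hk.1 (by omega) hl.2, sub_self, zero_mul]
      have := hdiff.trans hzero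
      linarith [this]
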